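/- arXiv:1904.01303 — 2 statements merged into one kernel-verified Lean document; each statement's English description precedes it below -/
import Mathlib

section
/- Let G be a simple graph and S a set of vertices of G (the stations) satisfying criterion C2: for every ordered pair of stations u, v ∈ S there exists a walk in G from u to v all of whose interior vertices lie outside S. Let P ⊆ S be the set of positions of parked robots. Then for any stations r, t, w, r' ∈ S with r, t, w, r' ∉ P (the delivering robot's start station, the task pickup station, the working station, and a free return robot station, respectively, none currently occupied by a parked robot), there exists a walk in G from r to r' passing through t and then through w such that no vertex of the walk lies in P. (Single-task step of Proposition 1: a robot can pick up and deliver its task and return to a free station without colliding with any parked robot.) -/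
/-- Under criterion C2 (between any two stations `u, v ∈ S` there is a walk
all of whose interior vertices lie outside `S`), for any parked-robot set `P ⊆ S` and any
stations `r, t, w, r' ∈ S` none of which lies in `P`, there is a walk from `r` to `r'`
passing through `t` and then through `w` whose vertices all avoid `P`. -/
theorem single_task_collision_free_route {V : Type*} (G : SimpleGraph V)
    (S : Set V)
    (hC2 : ∀ u ∈ S, ∀ v ∈ S, ∃ q : G.Walk u v,
      ∀ x ∈ q.support, x ≠ u → x ≠ v → x ∉ S)
    (P : Set V) (hPS : P ⊆ S)
    (r t w r' : V) (hr : r ∈ S) (ht : t ∈ S) (hw : w ∈ S) (hr' : r' ∈ S)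
    (hrP : r ∉ P) (htP : t ∉ P) (hwP : w ∉ P) (hr'P : r' ∉ P) :
    ∃ (q₁ : G.Walk r t) (q₂ : G.Walk t w) (q₃ : G.Walk w r'),
      ∀ x ∈ (q₁.append (q₂.append q₃)).support, x ∉ P := by
  obtain ⟨q₁, h₁⟩ := hC2 r hr t ht
  obtain ⟨q₂, h₂⟩ := hC2 t ht w hw
  obtain ⟨q₃, h₃⟩ := hC2 w hw r' hr'
  refine ⟨q₁, q₂, q₃, ?_⟩
  intro x hx hxP
  have hxS := hPS hxP
  simp only [SimpleGraph.Walk.support_append, List.mem_append] at hx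
  rcases hx with h | h
  rotate_left
  rcases List.mem_append.mp (List.mem_of_mem_tail h) with h | h
  rotate_left 2
  · rcases eq_or_ne x r with rfl | hxr; · exact hrP hxP
    rcases eq_or_ne x t with rfl | hxt; · exact htP hxP
    exact h₁ x h hxr hxt hxS
  · have h' : x ∈ q₂.support := h
    rcases eq_or_ne x t with rfl | hxt; · exact htP hxP
    rcases eq_or_ne x w with rfl | hxw; · exact hwP hxP
    exact h₂ x h' hxt hxw hxS
  · have h' : x ∈ q₃.support := List.mem_of_mem_tail h
    rcases eq_or_ne x w with rfl | hxw; · exact hwP hxP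
    rcases eq_or_ne x r' with rfl | hxr'; · exact hr'P hxP
    exact h₃ x h' hxw hxr' hxS
end

section
/- Let G be a simple graph, S a set of vertices of G (the stations), and R ⊆ S a set of robot stations. Assume criterion C2: for every ordered pair of stations u, v ∈ S there exists a walk in G from u to v all of whose interior vertices lie outside S. Let n robots be placed injectively on robot stations, i.e., there is an injective map pos : Fin n → R (criterion C1 guarantees n ≤ |R|). Let a finite sequence of tasks be given, where task i consists of a pickup station tᵢ ∈ S and a working station wᵢ ∈ S, and suppose that at the time each task is executed its pickup station and working station are not occupied by any parked robot (criteria C3–C5). Then there exists a sequence of executions, one task at a time, in which for each task some robot leaves its current robot station, traverses a walk through tᵢ and then wᵢ, and ends at a robot station not occupied by any other robot, such that throughout every such walk the moving robot never occupies a vertex occupied by another (parked) robot; after each execution the placement of robots on robot stations remains injective. In particular, the life-long task planning and motion coordination problem is always solvable under criteria C1–C5 (Proposition 1). -/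
/-- Proposition 1: Under criteria C1–C5 the life-long task planning and
motion coordination problem is always solvable.  `G` is the warehouse graph, `S` the
stations, `R ⊆ S` the robot stations.  C2: between any two stations there is a walk whose
interior vertices lie outside `S`.  `n` robots are parked injectively on robot stations
(`pos₀`).  There are `m` tasks with pickup stations `t i ∈ S` and working stations
`w i ∈ S`; by C3–C5 these are never occupied by a parked robot (robots park only in `R`,
and `t i, w i ∉ R`).  Then the tasks can be executed one at a time: for each task some
robot leaves its current robot station, traverses a walk through `t i` then `w i`, ends at
a robot station not occupied by any other robot, never meeting the position of any other
(parked) robot, and after each execution the placement on robot stations stays injective. -/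
theorem lifelong_planning_solvable {V : Type*} (G : SimpleGraph V)
    (S R : Set V) (hRS : R ⊆ S)
    (hC2 : ∀ u ∈ S, ∀ v ∈ S, ∃ q : G.Walk u v,
      ∀ x ∈ q.support, x ≠ u → x ≠ v → x ∉ S)
    (n : ℕ) (hn : 0 < n)
    (pos₀ : Fin n → V) (hpos₀R : ∀ k, pos₀ k ∈ R)
    (hinj₀ : Function.Injective pos₀)
    (m : ℕ) (t w : Fin m → V)
    (htS : ∀ i, t i ∈ S) (hwS : ∀ i, w i ∈ S)
    (htR : ∀ i, t i ∉ R) (hwR : ∀ i, w i ∉ R) :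
    ∃ pos : Fin (m + 1) → Fin n → V,
      pos 0 = pos₀ ∧
      (∀ i k, pos i k ∈ R) ∧
      (∀ i, Function.Injective (pos i)) ∧
      (∀ i : Fin m, ∃ k : Fin n,
        (∀ j, j ≠ k → pos i.succ j = pos i.castSucc j) ∧
        ∃ (q₁ : G.Walk (pos i.castSucc k) (t i)) (q₂ : G.Walk (t i) (w i))
          (q₃ : G.Walk (w i) (pos i.succ k)),
          ∀ x ∈ (q₁.append (q₂.append q₃)).support,
            ∀ j, j ≠ k → x ≠ pos i.castSucc j) := by

  refine ⟨fun _ => pos₀, rfl, fun _ k => hpos₀R k, fun _ => hinj₀, fun i => ?_⟩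
  refine ⟨⟨0, hn⟩, fun j _ => rfl, ?_⟩
  obtain ⟨q₁, hq₁⟩ := hC2 (pos₀ ⟨0, hn⟩) (hRS (hpos₀R _)) (t i) (htS i)
  obtain ⟨q₂, hq₂⟩ := hC2 (t i) (htS i) (w i) (hwS i)
  obtain ⟨q₃, hq₃⟩ := hC2 (w i) (hwS i) (pos₀ ⟨0, hn⟩) (hRS (hpos₀R _))
  refine ⟨q₁, q₂, q₃, fun x hx j hj => ?_⟩
  have hne0 : pos₀ ⟨0, hn⟩ ≠ pos₀ j := fun h => hj (hinj₀ h.symm)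
  have hRj : pos₀ j ∈ R := hpos₀R j
  rintro rfl
  rw [SimpleGraph.Walk.mem_support_append_iff,
    SimpleGraph.Walk.mem_support_append_iff] at hx
  rcases hx with h | h | h
  · rcases eq_or_ne (pos₀ j) (pos₀ ⟨0, hn⟩) with h' | h'
    · exact hne0 h'.symm
    · rcases eq_or_ne (pos₀ j) (t i) with h'' | h''
      · exact htR i (h'' ▸ hRj)
      · exact hq₁ _ h h' h'' (hRS hRj)
  · rcases eq_or_ne (pos₀ j) (t i) with h' | h'
    · exact htR i (h' ▸ hRj)
    · rcases eq_or_ne (pos₀ j) (w i) with h'' | h''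
      · exact hwR i (h'' ▸ hRj)
      · exact hq₂ _ h h' h'' (hRS hRj)
  · rcases eq_or_ne (pos₀ j) (w i) with h' | h'
    · exact hwR i (h' ▸ hRj)
    · rcases eq_or_ne (pos₀ j) (pos₀ ⟨0, hn⟩) with h'' | h''
      · exact hne0 h''.symm
      · exact hq₃ _ h h' h'' (hRS hRj)
end
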